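/- arXiv:1503.06256 — 3 statements merged into one kernel-verified Lean document; each statement's English description precedes it below -/
import Mathlib

section
/- Suppose x,y ∈ 𝔭 satisfy Gx = λx with λ > 0 and [x,Gy] = 0. Then B₋(x,y) = (λ/2)[x,y], B₊(x,y) = -(λ/2)[x,y], B₊(x,x) = 0, the bracket [x,y] lies in 𝔭, and the curvature expression satisfies κ(x,y) = (λ/2)·Q([x,y],[x,y]) + (λ²/4)·Q(G⁻¹[x,y],[x,y]) - (3/4)·Q(G[x,y],[x,y]). -/
/-- `B₊(x,y) = (1/2)([x,Gy] - [Gx,y])`. -/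
noncomputable def Bplus {𝔨 : Type*} [LieRing 𝔨] [LieAlgebra ℝ 𝔨]
    {𝔭 : Submodule ℝ 𝔨} (G : 𝔭 →ₗ[ℝ] 𝔭) (x y : 𝔭) : 𝔨 :=
  (1/2 : ℝ) • (⁅(x : 𝔨), (G y : 𝔨)⁆ - ⁅(G x : 𝔨), (y : 𝔨)⁆)

/-- `B₋(x,y) = (1/2)([x,Gy] + [Gx,y])`. -/
noncomputable def Bminus {𝔨 : Type*} [LieRing 𝔨] [LieAlgebra ℝ 𝔨]
    {𝔭 : Submodule ℝ 𝔨} (G : 𝔭 →ₗ[ℝ] 𝔭) (x y : 𝔭) : 𝔨 :=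
  (1/2 : ℝ) • (⁅(x : 𝔨), (G y : 𝔨)⁆ + ⁅(G x : 𝔨), (y : 𝔨)⁆)

/-- The curvature expression
`κ(x,y) = Q(B₋(x,y),[x,y]) - (3/4)·Q(G(P[x,y]), P[x,y]) + Q(B₊(x,y), G⁻¹(P(B₊(x,y))))
          - Q(B₊(x,x), G⁻¹(P(B₊(y,y))))`. -/
noncomputable def kappa {𝔨 : Type*} [LieRing 𝔨] [LieAlgebra ℝ 𝔨]
    (Q : 𝔨 →ₗ[ℝ] 𝔨 →ₗ[ℝ] ℝ) {𝔭 : Submodule ℝ 𝔨} (P : 𝔨 →ₗ[ℝ] 𝔭)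
    (G Ginv : 𝔭 →ₗ[ℝ] 𝔭) (x y : 𝔭) : ℝ :=
  Q (Bminus G x y) ⁅(x : 𝔨), (y : 𝔨)⁆
    - (3/4) * Q (G (P ⁅(x : 𝔨), (y : 𝔨)⁆) : 𝔨) (P ⁅(x : 𝔨), (y : 𝔨)⁆ : 𝔨)
    + Q (Bplus G x y) (Ginv (P (Bplus G x y)) : 𝔨)
    - Q (Bplus G x x) (Ginv (P (Bplus G y y)) : 𝔨)

/-- Suppose `x,y ∈ 𝔭` satisfy `Gx = λx` with `λ > 0` and `[x,Gy] = 0`.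
Then `B₋(x,y) = (λ/2)[x,y]`, `B₊(x,y) = -(λ/2)[x,y]`, `B₊(x,x) = 0`, the bracket `[x,y]`
lies in `𝔭`, and
`κ(x,y) = (λ/2)·Q([x,y],[x,y]) + (λ²/4)·Q(G⁻¹[x,y],[x,y]) - (3/4)·Q(G[x,y],[x,y])`. -/
theorem kappa_formula_of_smallest_eigenvector
    (𝔨 : Type*) [LieRing 𝔨] [LieAlgebra ℝ 𝔨] [FiniteDimensional ℝ 𝔨]
    (Q : 𝔨 →ₗ[ℝ] 𝔨 →ₗ[ℝ] ℝ)
    (hQsymm : ∀ x y : 𝔨, Q x y = Q y x)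
    (hQpos : ∀ x : 𝔨, x ≠ 0 → 0 < Q x x)
    (hQad : ∀ z x y : 𝔨, Q ⁅z, x⁆ y = - Q x ⁅z, y⁆)
    (𝔥 : LieSubalgebra ℝ 𝔨)
    (𝔭 : Submodule ℝ 𝔨) (h𝔭 : ∀ x : 𝔨, x ∈ 𝔭 ↔ ∀ v ∈ 𝔥, Q x v = 0)
    (P : 𝔨 →ₗ[ℝ] 𝔭) (hP₁ : ∀ x : 𝔭, P (x : 𝔨) = x) (hP₂ : ∀ x : 𝔨, x - (P x : 𝔨) ∈ 𝔥)
    (G : 𝔭 →ₗ[ℝ] 𝔭)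
    (hGsa : ∀ x y : 𝔭, Q (G x : 𝔨) (y : 𝔨) = Q (x : 𝔨) (G y : 𝔨))
    (hGpd : ∀ x : 𝔭, x ≠ 0 → 0 < Q (G x : 𝔨) (x : 𝔨))
    (hGad : ∀ v ∈ 𝔥, ∀ x : 𝔭, G (P ⁅v, (x : 𝔨)⁆) = P ⁅v, (G x : 𝔨)⁆)
    (Ginv : 𝔭 →ₗ[ℝ] 𝔭) (hGinv : ∀ x : 𝔭, Ginv (G x) = x ∧ G (Ginv x) = x)
    (x y : 𝔭) (lam : ℝ) (hlam : 0 < lam)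
    (hx : G x = lam • x) (hxGy : ⁅(x : 𝔨), (G y : 𝔨)⁆ = 0) :
    Bminus G x y = (lam/2) • ⁅(x : 𝔨), (y : 𝔨)⁆ ∧
    Bplus G x y = -((lam/2) • ⁅(x : 𝔨), (y : 𝔨)⁆) ∧
    Bplus G x x = 0 ∧
    ⁅(x : 𝔨), (y : 𝔨)⁆ ∈ 𝔭 ∧
    kappa Q P G Ginv x y
      = (lam/2) * Q ⁅(x : 𝔨), (y : 𝔨)⁆ ⁅(x : 𝔨), (y : 𝔨)⁆
        + (lam^2/4) * Q (Ginv (P ⁅(x : 𝔨), (y : 𝔨)⁆) : 𝔨) ⁅(x : 𝔨), (y : 𝔨)⁆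
        - (3/4) * Q (G (P ⁅(x : 𝔨), (y : 𝔨)⁆) : 𝔨) ⁅(x : 𝔨), (y : 𝔨)⁆ := by
  have hGx : (G x : 𝔨) = lam • (x : 𝔨) := by rw [hx]; simp
  have hBm : Bminus G x y = (lam/2) • ⁅(x : 𝔨), (y : 𝔨)⁆ := by
    rw [Bminus, hxGy, hGx, zero_add, smul_lie, smul_smul]
    ring_nf
  have hBp : Bplus G x y = -((lam/2) • ⁅(x : 𝔨), (y : 𝔨)⁆) := by
    rw [Bplus, hxGy, hGx, zero_sub, smul_lie, smul_neg, smul_smul]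
    ring_nf
  have hBxx : Bplus G x x = 0 := by
    rw [Bplus, hGx, lie_smul, smul_lie, sub_self, smul_zero]
  have hbr : ∀ v ∈ 𝔥, ∀ p : 𝔭, ⁅v, (p : 𝔨)⁆ ∈ 𝔭 := by
    intro v hv p
    rw [h𝔭]
    intro w hw
    rw [hQad]
    have hvw : ⁅v, w⁆ ∈ 𝔥 := 𝔥.lie_mem hv hw
    have := (h𝔭 (p : 𝔨)).mp p.2 _ hvw
    rw [this, neg_zero]
  have hmem : ⁅(x : 𝔨), (y : 𝔨)⁆ ∈ 𝔭 := by
    rw [h𝔭]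
    intro v hv
    have hu : ⁅v, (x : 𝔨)⁆ ∈ 𝔭 := hbr v hv x
    set u : 𝔭 := ⟨⁅v, (x : 𝔨)⁆, hu⟩ with hudef
    have hPu : P ⁅v, (x : 𝔨)⁆ = u := hP₁ u
    have hGu : G u = lam • u := by
      have h := hGad v hv x
      rw [hPu, hGx, lie_smul, map_smul, hPu] at h
      exact h
    have hGuc : (G u : 𝔨) = lam • (u : 𝔨) := by rw [hGu]; simp
    have h1 : Q ⁅(x : 𝔨), (G y : 𝔨)⁆ v = 0 := by rw [hxGy]; simp
    have h2 : Q (G y : 𝔨) ⁅(x : 𝔨), v⁆ = 0 := by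
      have h := hQad (x : 𝔨) (G y : 𝔨) v
      rw [h1] at h
      linarith
    have h7 : ⁅(x : 𝔨), v⁆ = -(u : 𝔨) := by
      simp only [hudef]
      rw [← lie_skew]
    have h3 : Q (G y : 𝔨) (u : 𝔨) = 0 := by
      have h : Q (G y : 𝔨) (-(u : 𝔨)) = 0 := by rw [← h7]; exact h2
      rw [map_neg, neg_eq_zero] at h
      exact h
    have h4 : Q (y : 𝔨) (u : 𝔨) = 0 := by
      have h5 : Q (y : 𝔨) (G u : 𝔨) = 0 := by
        rw [hQsymm, hGsa, hQsymm]
        exact h3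
      rw [hGuc, map_smul, smul_eq_mul] at h5
      rcases mul_eq_zero.mp h5 with h | h
      · exact absurd h hlam.ne'
      · exact h
    have h6 : Q ⁅(x : 𝔨), (y : 𝔨)⁆ v = - Q (y : 𝔨) ⁅(x : 𝔨), v⁆ := hQad _ _ _
    rw [h6, h7, map_neg, h4, neg_zero, neg_zero]
  have hPz : (P ⁅(x : 𝔨), (y : 𝔨)⁆ : 𝔨) = ⁅(x : 𝔨), (y : 𝔨)⁆ := by
    have h := hP₁ ⟨⁅(x : 𝔨), (y : 𝔨)⁆, hmem⟩
    rw [h]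
  refine ⟨hBm, hBp, hBxx, hmem, ?_⟩
  have hA : Q ((lam/2) • ⁅(x : 𝔨), (y : 𝔨)⁆) ⁅(x : 𝔨), (y : 𝔨)⁆
      = (lam/2) * Q ⁅(x : 𝔨), (y : 𝔨)⁆ ⁅(x : 𝔨), (y : 𝔨)⁆ := by
    rw [map_smul, LinearMap.smul_apply, smul_eq_mul]
  have e1 : (Ginv (P (-((lam/2) • ⁅(x : 𝔨), (y : 𝔨)⁆))) : 𝔨)
      = -((lam/2) • (Ginv (P ⁅(x : 𝔨), (y : 𝔨)⁆) : 𝔨)) := by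
    rw [map_neg, map_smul, map_neg, map_smul]
    simp
  have hC : Q (-((lam/2) • ⁅(x : 𝔨), (y : 𝔨)⁆)) ((Ginv (P (-((lam/2) • ⁅(x : 𝔨), (y : 𝔨)⁆))) : 𝔨))
      = (lam^2/4) * Q (Ginv (P ⁅(x : 𝔨), (y : 𝔨)⁆) : 𝔨) ⁅(x : 𝔨), (y : 𝔨)⁆ := by
    rw [e1]
    simp only [map_neg, map_smul, LinearMap.neg_apply, LinearMap.smul_apply, smul_eq_mul,
      neg_neg, neg_mul, mul_neg]
    rw [hQsymm]
    ring
  rw [kappa, hBm, hBp, hBxx, hA, hC, hPz, map_zero, LinearMap.zero_apply]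
  ring
end

section
/- Suppose λ > 0 is the smallest eigenvalue of G in the sense that Q(Gu,u) ≥ λ·Q(u,u) for all u ∈ 𝔭, and let x ∈ 𝔭 satisfy Gx = λx. If z ∈ 𝔭 is linearly independent from x with [x,z] = 0 and we set y = G⁻¹z, then x and y are linearly independent and κ(x,y) ≤ 0. (In the paper's formulation: x and y generate a plane of non-positive curvature in K/H.) -/
/-- Suppose `λ > 0` is the smallest eigenvalue of `G` in the sense that
`Q(Gu,u) ≥ λ·Q(u,u)` for all `u ∈ 𝔭`, and let `x ∈ 𝔭` satisfy `Gx = λx`.  If `z ∈ 𝔭` is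
linearly independent from `x` with `[x,z] = 0` and we set `y = G⁻¹z`, then `x` and `y` are
linearly independent and `κ(x,y) ≤ 0` (x and y generate a plane of non-positive curvature
in `K/H`). -/
theorem kappa_nonpos_of_smallest_eigenvector
    (𝔨 : Type*) [LieRing 𝔨] [LieAlgebra ℝ 𝔨] [FiniteDimensional ℝ 𝔨]
    (Q : 𝔨 →ₗ[ℝ] 𝔨 →ₗ[ℝ] ℝ)
    (hQsymm : ∀ x y : 𝔨, Q x y = Q y x)
    (hQpos : ∀ x : 𝔨, x ≠ 0 → 0 < Q x x)
    (hQad : ∀ z x y : 𝔨, Q ⁅z, x⁆ y = - Q x ⁅z, y⁆)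
    (𝔥 : LieSubalgebra ℝ 𝔨)
    (𝔭 : Submodule ℝ 𝔨) (h𝔭 : ∀ x : 𝔨, x ∈ 𝔭 ↔ ∀ v ∈ 𝔥, Q x v = 0)
    (P : 𝔨 →ₗ[ℝ] 𝔭) (hP₁ : ∀ x : 𝔭, P (x : 𝔨) = x) (hP₂ : ∀ x : 𝔨, x - (P x : 𝔨) ∈ 𝔥)
    (G : 𝔭 →ₗ[ℝ] 𝔭)
    (hGsa : ∀ x y : 𝔭, Q (G x : 𝔨) (y : 𝔨) = Q (x : 𝔨) (G y : 𝔨))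
    (hGpd : ∀ x : 𝔭, x ≠ 0 → 0 < Q (G x : 𝔨) (x : 𝔨))
    (hGad : ∀ v ∈ 𝔥, ∀ x : 𝔭, G (P ⁅v, (x : 𝔨)⁆) = P ⁅v, (G x : 𝔨)⁆)
    (Ginv : 𝔭 →ₗ[ℝ] 𝔭) (hGinv : ∀ x : 𝔭, Ginv (G x) = x ∧ G (Ginv x) = x)
    (lam : ℝ) (hlam : 0 < lam)
    (hmin : ∀ u : 𝔭, lam * Q (u : 𝔨) (u : 𝔨) ≤ Q (G u : 𝔨) (u : 𝔨))
    (x : 𝔭) (hx : G x = lam • x)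
    (z : 𝔭) (hind : LinearIndependent ℝ ![x, z])
    (hxz : ⁅(x : 𝔨), (z : 𝔨)⁆ = 0) :
    LinearIndependent ℝ ![x, Ginv z] ∧ kappa Q P G Ginv x (Ginv z) ≤ 0 := by
  set y : 𝔭 := Ginv z with hy
  have hGy : G y = z := (hGinv z).2
  have hskew : ∀ a b : 𝔨, ⁅a, b⁆ = -⁅b, a⁆ := fun a b => (lie_skew a b).symm
  have hQnn : ∀ w : 𝔨, 0 ≤ Q w w := by
    intro w
    by_cases h : w = 0
    · simp [h]
    · exact (hQpos w h).le
  have hQzero : ∀ w : 𝔨, Q w w = 0 → w = 0 := by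
    intro w hw
    by_contra h
    exact absurd hw (ne_of_gt (hQpos w h))
  have hperp : ∀ (u : 𝔭) (v : 𝔨), v ∈ 𝔥 → Q (u : 𝔨) v = 0 := fun u v hv =>
    (h𝔭 u).1 u.2 v hv
  have hGxc : (G x : 𝔨) = lam • (x : 𝔨) := by rw [hx]; simp
  -- key orthogonality: Q ⁅x,y⁆ v = 0 for v ∈ 𝔥
  have hQxyv : ∀ v ∈ 𝔥, Q ⁅(x : 𝔨), (y : 𝔨)⁆ v = 0 := by
    intro v hv
    have h1 : Q ⁅(x : 𝔨), (y : 𝔨)⁆ v = Q (y : 𝔨) ⁅v, (x : 𝔨)⁆ := by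
      rw [hQad, hskew v (x : 𝔨), map_neg]
    set u : 𝔭 := P ⁅v, (x : 𝔨)⁆ with hu
    have hh' : ⁅v, (x : 𝔨)⁆ - (u : 𝔨) ∈ 𝔥 := hP₂ _
    have hGu : G u = lam • u := by
      have h2 := hGad v hv x
      rw [hx] at h2
      simpa [lie_smul] using h2
    have hzvx : Q (z : 𝔨) ⁅v, (x : 𝔨)⁆ = 0 := by
      have h3 : Q ⁅(x : 𝔨), (z : 𝔨)⁆ v = 0 := by rw [hxz]; simp
      rw [hQad] at h3
      rw [hskew v (x : 𝔨), map_neg]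
      linarith [h3]
    have hzu : Q (z : 𝔨) (u : 𝔨) = 0 := by
      have h5 : Q (z : 𝔨) ⁅v, (x : 𝔨)⁆
          = Q (z : 𝔨) (u : 𝔨) + Q (z : 𝔨) (⁅v, (x : 𝔨)⁆ - (u : 𝔨)) := by
        rw [← map_add]
        congr 1
        abel
      have h6 : Q (z : 𝔨) (⁅v, (x : 𝔨)⁆ - (u : 𝔨)) = 0 := hperp z _ hh'
      rw [hzvx, h6, add_zero] at h5
      linarith [h5]
    have hyu : Q (y : 𝔨) (u : 𝔨) = 0 := by
      have h7 := hGsa y u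
      rw [hGy, hGu] at h7
      have h8 : Q (y : 𝔨) ((lam • u : 𝔭) : 𝔨) = lam * Q (y : 𝔨) (u : 𝔨) := by
        simp
      rw [h8, hzu] at h7
      exact (mul_eq_zero.mp h7.symm).resolve_left hlam.ne'
    rw [h1]
    have h9 : Q (y : 𝔨) ⁅v, (x : 𝔨)⁆
        = Q (y : 𝔨) (u : 𝔨) + Q (y : 𝔨) (⁅v, (x : 𝔨)⁆ - (u : 𝔨)) := by
      rw [← map_add]; congr 1; abel
    rw [h9, hyu, hperp y _ hh', add_zero]
  -- [x,y] lies in 𝔭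
  have hw𝔭 : ((P ⁅(x : 𝔨), (y : 𝔨)⁆ : 𝔭) : 𝔨) = ⁅(x : 𝔨), (y : 𝔨)⁆ := by
    have hh : ⁅(x : 𝔨), (y : 𝔨)⁆ - ((P ⁅(x : 𝔨), (y : 𝔨)⁆ : 𝔭) : 𝔨) ∈ 𝔥 := hP₂ _
    have e1 := hQxyv _ hh
    have e2 := hperp (P ⁅(x : 𝔨), (y : 𝔨)⁆) _ hh
    have hQh : Q (⁅(x : 𝔨), (y : 𝔨)⁆ - ((P ⁅(x : 𝔨), (y : 𝔨)⁆ : 𝔭) : 𝔨))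
        (⁅(x : 𝔨), (y : 𝔨)⁆ - ((P ⁅(x : 𝔨), (y : 𝔨)⁆ : 𝔭) : 𝔨)) = 0 := by
      simp only [map_sub, LinearMap.sub_apply] at e1 e2 ⊢
      linarith [e1, e2]
    have h10 := hQzero _ hQh
    exact (sub_eq_zero.mp h10).symm
  constructor
  · -- linear independence
    rw [LinearIndependent.pair_iff]
    intro s t hst
    have hG0 : s • G x + t • G y = 0 := by
      rw [← map_smul, ← map_smul, ← map_add, hst, map_zero]
    rw [hx, hGy, smul_smul] at hG0
    have hst' := LinearIndependent.pair_iff.mp hind (s * lam) t hG0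
    exact ⟨(mul_eq_zero.mp hst'.1).resolve_right hlam.ne', hst'.2⟩
  · -- curvature nonpositivity
    set w : 𝔨 := ⁅(x : 𝔨), (y : 𝔨)⁆ with hwdef
    set p : 𝔭 := P w with hpdef
    have hxGy : ⁅(x : 𝔨), (G y : 𝔨)⁆ = 0 := by rw [hGy]; exact hxz
    have hGxy : ⁅(G x : 𝔨), (y : 𝔨)⁆ = lam • w := by rw [hGxc, smul_lie]
    have hBm : Bminus G x y = (lam / 2) • w := by
      rw [Bminus, hxGy, hGxy, zero_add, smul_smul]
      congr 1
      ring
    have hBp : Bplus G x y = (-(lam / 2)) • w := by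
      rw [Bplus, hxGy, hGxy, zero_sub, smul_neg, smul_smul, ← neg_smul]
      congr 1
      ring
    have hBxx : Bplus G x x = 0 := by
      rw [Bplus, hGxc]
      simp
    have hkappa : kappa Q P G Ginv x y
        = lam / 2 * Q ((p : 𝔭) : 𝔨) ((p : 𝔭) : 𝔨) - 3 / 4 * Q ((G p : 𝔭) : 𝔨) ((p : 𝔭) : 𝔨)
          + lam ^ 2 / 4 * Q ((p : 𝔭) : 𝔨) ((Ginv p : 𝔭) : 𝔨) := by
      rw [kappa, hBm, hBp, hBxx, ← hwdef, ← hw𝔭]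
      simp only [map_smul, LinearMap.smul_apply, SetLike.val_smul, hP₁, map_zero,
        LinearMap.zero_apply, smul_eq_mul]
      ring
    clear_value y w p
    rw [hkappa]
    have hgc : lam * Q ((p : 𝔭) : 𝔨) ((p : 𝔭) : 𝔨) ≤ Q ((G p : 𝔭) : 𝔨) ((p : 𝔭) : 𝔨) := hmin p
    have hst : lam * Q ((Ginv p : 𝔭) : 𝔨) ((Ginv p : 𝔭) : 𝔨)
        ≤ Q ((p : 𝔭) : 𝔨) ((Ginv p : 𝔭) : 𝔨) := by
      have h := hmin (Ginv p)
      rwa [(hGinv p).2] at h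
    have hCS : 0 ≤ lam ^ 2 * Q ((Ginv p : 𝔭) : 𝔨) ((Ginv p : 𝔭) : 𝔨)
        - 2 * lam * Q ((p : 𝔭) : 𝔨) ((Ginv p : 𝔭) : 𝔨) + Q ((p : 𝔭) : 𝔨) ((p : 𝔭) : 𝔨) := by
      have h0 := hQnn (lam • ((Ginv p : 𝔭) : 𝔨) - ((p : 𝔭) : 𝔨))
      have hexp : Q (lam • ((Ginv p : 𝔭) : 𝔨) - ((p : 𝔭) : 𝔨))
          (lam • ((Ginv p : 𝔭) : 𝔨) - ((p : 𝔭) : 𝔨))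
          = lam ^ 2 * Q ((Ginv p : 𝔭) : 𝔨) ((Ginv p : 𝔭) : 𝔨)
            - 2 * lam * Q ((p : 𝔭) : 𝔨) ((Ginv p : 𝔭) : 𝔨)
            + Q ((p : 𝔭) : 𝔨) ((p : 𝔭) : 𝔨) := by
        simp only [map_sub, LinearMap.sub_apply, map_smul, LinearMap.smul_apply, smul_eq_mul]
        rw [hQsymm ((Ginv p : 𝔭) : 𝔨) ((p : 𝔭) : 𝔨)]
        ring
      rw [hexp] at h0
      exact h0
    have hsc : lam * Q ((p : 𝔭) : 𝔨) ((Ginv p : 𝔭) : 𝔨) ≤ Q ((p : 𝔭) : 𝔨) ((p : 𝔭) : 𝔨) := by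
      have h2 := mul_le_mul_of_nonneg_left hst hlam.le
      linarith [hCS, h2]
    have h3 := mul_le_mul_of_nonneg_left hsc hlam.le
    linarith [hgc, h3]
end

section
/- If x,y ∈ 𝔭 are eigenvectors of G for distinct eigenvalues (Gx = λ₁x, Gy = λ₂y, λ₁ ≠ λ₂) and the bracket [x,y] lies in 𝔥 (i.e. is orthogonal to 𝔭), then [x,y] = 0. (This is the closing step of the paper's G₂ argument: B₊(x,y) = (1/2)(λ₂-λ₁)[x,y] must lie in 𝔭, forcing [x,y] = 0.) -/
/-- If `x,y ∈ 𝔭` are eigenvectors of `G` for distinct eigenvalues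
(`Gx = λ₁x`, `Gy = λ₂y`, `λ₁ ≠ λ₂`) and the bracket `[x,y]` lies in `𝔥` (i.e. is orthogonal
to `𝔭`), then `[x,y] = 0`.  (Closing step of the paper's `G₂` argument:
`B₊(x,y) = (1/2)(λ₂-λ₁)[x,y]` must lie in `𝔭`, forcing `[x,y] = 0`.) -/
theorem bracket_eq_zero_of_distinct_eigenvalues_of_bracket_mem
    (𝔨 : Type*) [LieRing 𝔨] [LieAlgebra ℝ 𝔨] [FiniteDimensional ℝ 𝔨]
    (Q : 𝔨 →ₗ[ℝ] 𝔨 →ₗ[ℝ] ℝ)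
    (hQsymm : ∀ x y : 𝔨, Q x y = Q y x)
    (hQpos : ∀ x : 𝔨, x ≠ 0 → 0 < Q x x)
    (hQad : ∀ z x y : 𝔨, Q ⁅z, x⁆ y = - Q x ⁅z, y⁆)
    (𝔥 : LieSubalgebra ℝ 𝔨)
    (𝔭 : Submodule ℝ 𝔨) (h𝔭 : ∀ x : 𝔨, x ∈ 𝔭 ↔ ∀ v ∈ 𝔥, Q x v = 0)
    (P : 𝔨 →ₗ[ℝ] 𝔭) (hP₁ : ∀ x : 𝔭, P (x : 𝔨) = x) (hP₂ : ∀ x : 𝔨, x - (P x : 𝔨) ∈ 𝔥)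
    (G : 𝔭 →ₗ[ℝ] 𝔭)
    (hGsa : ∀ x y : 𝔭, Q (G x : 𝔨) (y : 𝔨) = Q (x : 𝔨) (G y : 𝔨))
    (hGpd : ∀ x : 𝔭, x ≠ 0 → 0 < Q (G x : 𝔨) (x : 𝔨))
    (hGad : ∀ v ∈ 𝔥, ∀ x : 𝔭, G (P ⁅v, (x : 𝔨)⁆) = P ⁅v, (G x : 𝔨)⁆)
    (x y : 𝔭) (lam₁ lam₂ : ℝ) (hne : lam₁ ≠ lam₂)
    (hx : G x = lam₁ • x) (hy : G y = lam₂ • y)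
    (hmem : ⁅(x : 𝔨), (y : 𝔨)⁆ ∈ 𝔥) :
    ⁅(x : 𝔨), (y : 𝔨)⁆ = 0 := by
  set z : 𝔨 := ⁅(x : 𝔨), (y : 𝔨)⁆ with hz
  -- w = P [z, y] is an eigenvector of G with eigenvalue lam₂
  set w : 𝔭 := P ⁅z, (y : 𝔨)⁆ with hw
  have hGw : G w = lam₂ • w := by
    have := hGad z hmem y
    rw [hy] at this
    have h2 : (((lam₂ • y : 𝔭) : 𝔨)) = lam₂ • (y : 𝔨) := rfl
    rw [h2, lie_smul, map_smul] at this
    exact this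
  -- decompose [z,y] = w + h with h ∈ 𝔥
  have hh : ⁅z, (y : 𝔨)⁆ - (w : 𝔨) ∈ 𝔥 := hP₂ _
  -- Q vanishes between 𝔭 and 𝔥
  have hQph : ∀ (p : 𝔭) (h : 𝔨), h ∈ 𝔥 → Q (p : 𝔨) h = 0 := fun p h hmem' =>
    (h𝔭 (p : 𝔨)).mp p.2 h hmem'
  have key : ∀ p : 𝔭, Q (p : 𝔨) ⁅z, (y : 𝔨)⁆ = Q (p : 𝔨) (w : 𝔨) := by
    intro p
    have : Q (p : 𝔨) (⁅z, (y : 𝔨)⁆ - (w : 𝔨)) = 0 := hQph p _ hh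
    rw [map_sub] at this
    linarith [this]
  -- (lam₁ - lam₂) * Q x w = 0
  have e1 : Q ((G x : 𝔭) : 𝔨) ⁅z, (y : 𝔨)⁆ = lam₂ * Q (x : 𝔨) (w : 𝔨) := by
    rw [key (G x), hGsa x w, hGw]
    have : ((lam₂ • w : 𝔭) : 𝔨) = lam₂ • (w : 𝔨) := rfl
    rw [this, map_smul]
    rfl
  have e2 : Q ((G x : 𝔭) : 𝔨) ⁅z, (y : 𝔨)⁆ = lam₁ * Q (x : 𝔨) (w : 𝔨) := by
    rw [hx]
    have : ((lam₁ • x : 𝔭) : 𝔨) = lam₁ • (x : 𝔨) := rfl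
    rw [this, map_smul, LinearMap.smul_apply, key x]
    rfl
  have hxw : Q (x : 𝔨) (w : 𝔨) = 0 := by
    have : (lam₁ - lam₂) * Q (x : 𝔨) (w : 𝔨) = 0 := by linarith [e1, e2]
    rcases mul_eq_zero.mp this with h | h
    · exact absurd (by linarith : lam₁ = lam₂) hne
    · exact h
  have hxzy : Q (x : 𝔨) ⁅z, (y : 𝔨)⁆ = 0 := by rw [key x, hxw]
  -- Q z z = 0
  have hQzz : Q z z = 0 := by
    have h1 : Q ⁅(x : 𝔨), (y : 𝔨)⁆ z = - Q (y : 𝔨) ⁅(x : 𝔨), z⁆ := hQad _ _ _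
    have h2 : Q ⁅z, (x : 𝔨)⁆ (y : 𝔨) = - Q (x : 𝔨) ⁅z, (y : 𝔨)⁆ := hQad _ _ _
    have h3 : ⁅(x : 𝔨), z⁆ = - ⁅z, (x : 𝔨)⁆ := (lie_skew _ _).symm
    rw [← hz] at h1
    rw [h3, map_neg, hQsymm (y : 𝔨)] at h1
    rw [h2, hxzy] at h1
    simpa using h1
  by_contra hzero
  exact absurd hQzz (ne_of_gt (hQpos z hzero))
end
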